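/- Let C ⊆ E be a convex set of diameter at most D > 0, and let T : E → E map C into C and be α-gradually expansive on C with α ∈ (0, √2 - 1). Let c > 0 and β ∈ (0,1) satisfy β² = (1+c)·α·(1 + α + β²), let ε̄ > 0, let y₀ ∈ C satisfy ‖T(y₀) - y₀‖ ≤ ε̄, set λ = (β²·ε̄/D)/(1 + β²·ε̄/D), and let the sequence (y_j) be defined by y_{j+1} = λ·y₀ + (1-λ)·T(y_j). Then for every j ≥ 1, ‖y_{j+1} - y_j‖ ≤ (1 - (λ/(1+c))·(c + λ))·‖y_j - y_{j-1}‖. -/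

import Mathlib

/-- For an α-gradually expansive operator (α ∈ (0, √2 - 1)) on a convex set of
diameter at most `D`, with β² = (1+c)α(1 + α + β²) and step size
`λ = (β²ε̄/D)/(1 + β²ε̄/D)`, the fixed-step Halpern iteration started at a point
with fixed-point error at most ε̄ contracts successive iterate distances:
`‖y_{j+1} - y_j‖ ≤ (1 - (λ/(1+c))(c + λ)) ‖y_j - y_{j-1}‖` for all j ≥ 1. -/
theorem gradually_expansive_halpern_increment_contraction
    {E : Type*} [NormedAddCommGroup E] [NormedSpace ℝ E]
    (C : Set E) (hC : Convex ℝ C)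
    (D : ℝ) (hD0 : 0 < D) (hdiam : ∀ x ∈ C, ∀ y ∈ C, ‖x - y‖ ≤ D)
    (T : E → E) (hTC : ∀ x ∈ C, T x ∈ C)
    (α : ℝ) (hα0 : 0 < α) (hα1 : α < Real.sqrt 2 - 1)
    (hT : ∀ x ∈ C, ∀ y ∈ C,
      ‖T x - T y‖ ≤ (1 + α * max ‖T x - x‖ ‖T y - y‖ / D) * ‖x - y‖)
    (c : ℝ) (hc : 0 < c) (β : ℝ) (hβ0 : 0 < β) (hβ1 : β < 1)
    (hβ : β ^ 2 = (1 + c) * α * (1 + α + β ^ 2))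
    (ε : ℝ) (hε : 0 < ε)
    (y₀ : E) (hy₀C : y₀ ∈ C) (hy₀ : ‖T y₀ - y₀‖ ≤ ε)
    (l : ℝ) (hl : l = (β ^ 2 * ε / D) / (1 + β ^ 2 * ε / D))
    (y : ℕ → E) (hy0 : y 0 = y₀)
    (hy : ∀ j : ℕ, y (j + 1) = l • y₀ + (1 - l) • T (y j)) :
    ∀ j : ℕ, 1 ≤ j →
      ‖y (j + 1) - y j‖ ≤ (1 - (l / (1 + c)) * (c + l)) * ‖y j - y (j - 1)‖ := by
  have h1c : (0:ℝ) < 1 + c := by linarith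
  obtain ⟨u, hu_def⟩ : ∃ u : ℝ, u = β ^ 2 * ε / D := ⟨_, rfl⟩
  rw [← hu_def] at hl
  have hu : 0 < u := by rw [hu_def]; positivity
  have h1u : (0:ℝ) < 1 + u := by linarith
  have huD : u * D = β ^ 2 * ε := by rw [hu_def]; field_simp
  have hl0 : 0 < l := by rw [hl]; positivity
  have hl1 : l < 1 := by
    rw [hl, div_lt_one h1u]; linarith
  have h1l : (0:ℝ) < 1 - l := by linarith
  obtain ⟨R, hR_def⟩ : ∃ R : ℝ, R = l * D / ((1 + c) * α) := ⟨_, rfl⟩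
  have hR0 : 0 < R := by rw [hR_def]; positivity
  have hRval : R = ε * (1 + α + β ^ 2) / (1 + u) := by
    rw [hR_def, hl, div_mul_eq_mul_div, div_div, div_eq_div_iff (by positivity) h1u.ne']
    linear_combination (1 + u) * huD + (1 + u) * ε * hβ
  -- Identity: (1-l)(1+αR/D) = q
  have hαRD : α * R / D = l / (1 + c) := by
    rw [hR_def]; field_simp
  have hqA : (1 - l) * (1 + α * R / D) = 1 - (l / (1 + c)) * (c + l) := by
    rw [hαRD]; field_simp; ring
  have hq0 : 0 ≤ 1 - (l / (1 + c)) * (c + l) := by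
    have h1 : l * (c + l) ≤ 1 + c := by nlinarith
    have h2 : (l / (1 + c)) * (c + l) = l * (c + l) / (1 + c) := by ring
    rw [h2, sub_nonneg, div_le_one h1c]
    exact h1
  have hq1 : 1 - (l / (1 + c)) * (c + l) ≤ 1 := by
    have : 0 ≤ (l / (1 + c)) * (c + l) := by positivity
    linarith
  -- Identity B: (1+α)*((1-l)*ε) + l*D ≤ R
  have h1ml : 1 - l = 1 / (1 + u) := by
    rw [hl]; field_simp; ring
  have hlD : l * D = β ^ 2 * ε / (1 + u) := by
    rw [hl, div_mul_eq_mul_div, div_eq_div_iff h1u.ne' h1u.ne']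
    linear_combination (1 + u) * huD
  have hB : (1 + α) * ((1 - l) * ε) + l * D ≤ R := by
    rw [hRval, h1ml, hlD]
    apply le_of_eq
    field_simp
  -- memberships
  have hyC : ∀ j, y j ∈ C := by
    intro j
    induction j with
    | zero => rw [hy0]; exact hy₀C
    | succ k ih =>
      rw [hy k]
      exact hC hy₀C (hTC _ ih) hl0.le (by linarith) (by ring)
  have hres : ∀ j, ‖T (y j) - y j‖ ≤ D := fun j => hdiam _ (hTC _ (hyC j)) _ (hyC j)
  have hTdist : ∀ j, ‖T (y j) - y₀‖ ≤ D := fun j => hdiam _ (hTC _ (hyC j)) _ hy₀C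
  -- increment formulas
  have hinc : ∀ k : ℕ, y (k + 2) - y (k + 1) = (1 - l) • (T (y (k + 1)) - T (y k)) := by
    intro k; rw [hy (k + 1), hy k]; module
  have hinc0 : y 1 - y 0 = (1 - l) • (T y₀ - y₀) := by
    rw [hy 0, hy0]; module
  have hresdec : ∀ k : ℕ, T (y k) - y (k + 1) = l • (T (y k) - y₀) := by
    intro k; rw [hy k]; module
  -- key lemma: small increments force small residuals
  have hkey : ∀ k : ℕ, ‖y (k + 1) - y k‖ ≤ (1 - l) * ε →
      ‖T (y (k + 1)) - y (k + 1)‖ ≤ R := by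
    intro k hk
    have h1 : ‖T (y (k + 1)) - y (k + 1)‖ ≤ ‖T (y (k + 1)) - T (y k)‖ + l * D := by
      calc ‖T (y (k + 1)) - y (k + 1)‖
          = ‖(T (y (k + 1)) - T (y k)) + (T (y k) - y (k + 1))‖ := by
            rw [sub_add_sub_cancel]
        _ ≤ ‖T (y (k + 1)) - T (y k)‖ + ‖T (y k) - y (k + 1)‖ := norm_add_le _ _
        _ ≤ ‖T (y (k + 1)) - T (y k)‖ + l * D := by
            rw [hresdec k, norm_smul, Real.norm_of_nonneg hl0.le]
            have := mul_le_mul_of_nonneg_left (hTdist k) hl0.le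
            linarith
    have h2 : ‖T (y (k + 1)) - T (y k)‖ ≤ (1 + α) * ‖y (k + 1) - y k‖ := by
      have hTT := hT _ (hyC (k + 1)) _ (hyC k)
      have hmax : max ‖T (y (k + 1)) - y (k + 1)‖ ‖T (y k) - y k‖ ≤ D :=
        max_le (hres _) (hres _)
      have hdle : α * max ‖T (y (k + 1)) - y (k + 1)‖ ‖T (y k) - y k‖ / D ≤ α := by
        rw [div_le_iff₀ hD0]
        exact mul_le_mul_of_nonneg_left hmax hα0.le
      have hmono := mul_le_mul_of_nonneg_right (add_le_add_left hdle 1)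
        (norm_nonneg (y (k + 1) - y k))
      linarith
    have h3 : (1 + α) * ‖y (k + 1) - y k‖ ≤ (1 + α) * ((1 - l) * ε) :=
      mul_le_mul_of_nonneg_left hk (by linarith)
    linarith
  -- contraction lemma
  have hcontr : ∀ k : ℕ, ‖T (y (k + 1)) - y (k + 1)‖ ≤ R → ‖T (y k) - y k‖ ≤ R →
      ‖y (k + 2) - y (k + 1)‖ ≤ (1 - (l / (1 + c)) * (c + l)) * ‖y (k + 1) - y k‖ := by
    intro k hr1 hr2
    have hnorm : ‖y (k + 2) - y (k + 1)‖ = (1 - l) * ‖T (y (k + 1)) - T (y k)‖ := by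
      rw [hinc k, norm_smul, Real.norm_of_nonneg h1l.le]
    rw [hnorm, ← hqA]
    have hTT := hT _ (hyC (k + 1)) _ (hyC k)
    have hmaxR : max ‖T (y (k + 1)) - y (k + 1)‖ ‖T (y k) - y k‖ ≤ R := max_le hr1 hr2
    have hdle : α * max ‖T (y (k + 1)) - y (k + 1)‖ ‖T (y k) - y k‖ / D ≤ α * R / D := by
      gcongr
    have hmono := mul_le_mul_of_nonneg_right (add_le_add_left hdle 1)
      (norm_nonneg (y (k + 1) - y k))
    have hfinal : ‖T (y (k + 1)) - T (y k)‖ ≤ (1 + α * R / D) * ‖y (k + 1) - y k‖ := by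
      linarith
    calc (1 - l) * ‖T (y (k + 1)) - T (y k)‖
        ≤ (1 - l) * ((1 + α * R / D) * ‖y (k + 1) - y k‖) :=
          mul_le_mul_of_nonneg_left hfinal h1l.le
      _ = (1 - l) * (1 + α * R / D) * ‖y (k + 1) - y k‖ := by ring
  -- initial residual
  have hr0 : ‖T (y 0) - y 0‖ ≤ R := by
    rw [hy0]
    rcases le_total ε D with h | h
    · have hub : u ≤ β ^ 2 := by
        have h1 : u * D ≤ β ^ 2 * D := by
          rw [huD]
          exact mul_le_mul_of_nonneg_left h (by positivity)
        exact le_of_mul_le_mul_right h1 hD0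
      have hεR : ε ≤ R := by
        rw [hRval, le_div_iff₀ h1u]
        gcongr
        linarith
      linarith
    · have hDR : D ≤ R := by
        rw [hRval, le_div_iff₀ h1u]
        nlinarith [huD, mul_pos hα0 hε]
      have : ‖T y₀ - y₀‖ ≤ D := hdiam _ (hTC _ hy₀C) _ hy₀C
      linarith
  -- main induction
  have main : ∀ k : ℕ, ‖y (k + 1) - y k‖ ≤ (1 - l) * ε ∧
      ‖y (k + 2) - y (k + 1)‖ ≤ (1 - (l / (1 + c)) * (c + l)) * ‖y (k + 1) - y k‖ := by
    intro k
    induction k with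
    | zero =>
      have h10 : ‖y 1 - y 0‖ ≤ (1 - l) * ε := by
        rw [hinc0, norm_smul, Real.norm_of_nonneg h1l.le]
        exact mul_le_mul_of_nonneg_left hy₀ h1l.le
      exact ⟨h10, hcontr 0 (hkey 0 h10) hr0⟩
    | succ k ih =>
      have hk1 : ‖y (k + 2) - y (k + 1)‖ ≤ (1 - l) * ε := by
        calc ‖y (k + 2) - y (k + 1)‖
            ≤ (1 - (l / (1 + c)) * (c + l)) * ‖y (k + 1) - y k‖ := ih.2
          _ ≤ 1 * ((1 - l) * ε) := mul_le_mul hq1 ih.1 (norm_nonneg _) zero_le_one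
          _ = (1 - l) * ε := one_mul _
      exact ⟨hk1, hcontr (k + 1) (hkey (k + 1) hk1) (hkey k ih.1)⟩
  intro j hj
  obtain ⟨k, rfl⟩ : ∃ k, j = k + 1 := ⟨j - 1, (Nat.succ_pred_eq_of_pos hj).symm⟩
  simp only [Nat.add_sub_cancel]
  exact (main k).2
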